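/- (Proposition 3, weak Lie theorem) Let L be a finite-dimensional solvable left Leibniz algebra over the field ℂ, with dim L = n. Then there exists a complete flag of subspaces V_0 = {0} ⊂ V_1 ⊂ ⋯ ⊂ V_n = L with dim V_k = k such that [x, V_k] ⊆ V_k for every x ∈ L and every k; equivalently, all left multiplication operators l_x can be simultaneously put in upper-triangular form. -/

import Mathlib

/-
Basic notions for (left) Leibniz algebras, given by a bilinear bracket
`β : M →ₗ[k] M →ₗ[k] M` on a `k`-vector space `M`.
-/

section LeibnizDefs

variable {k : Type*} [Field k] {M : Type*} [AddCommGroup M] [Module k M]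

/-- `[A, B]`: the linear span of brackets of elements of two subspaces. -/
def bracketSpan (β : M →ₗ[k] M →ₗ[k] M) (A B : Submodule k M) : Submodule k M :=
  Submodule.span k {z : M | ∃ a ∈ A, ∃ b ∈ B, z = β a b}

/-- Derived series of a subspace `I`: `D^0 = I`, `D^{n+1} = [D^n, D^n]`. -/
def derivedSeriesOf (β : M →ₗ[k] M →ₗ[k] M) (I : Submodule k M) : ℕ → Submodule k M
  | 0 => I
  | n + 1 => bracketSpan β (derivedSeriesOf β I n) (derivedSeriesOf β I n)

/-- Lower central series of a subspace `I`: `C^0 = I`, `C^{n+1} = [I, C^n]`. -/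
def lowerCentralSeriesOf (β : M →ₗ[k] M →ₗ[k] M) (I : Submodule k M) : ℕ → Submodule k M
  | 0 => I
  | n + 1 => bracketSpan β I (lowerCentralSeriesOf β I n)

/-- A two-sided ideal. -/
def LeibnizIdeal (β : M →ₗ[k] M →ₗ[k] M) (I : Submodule k M) : Prop :=
  (∀ x : M, ∀ u ∈ I, β x u ∈ I) ∧ (∀ u ∈ I, ∀ x : M, β u x ∈ I)

/-- A subspace is solvable if its derived series reaches `0`. -/
def LeibnizSolvable (β : M →ₗ[k] M →ₗ[k] M) (I : Submodule k M) : Prop :=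
  ∃ n, derivedSeriesOf β I n = ⊥

/-- A subspace is nilpotent if its lower central series reaches `0`. -/
def LeibnizNilpotent (β : M →ₗ[k] M →ₗ[k] M) (I : Submodule k M) : Prop :=
  ∃ n, lowerCentralSeriesOf β I n = ⊥

/-- A subalgebra: a subspace closed under the bracket. -/
def LeibnizSubalgebra (β : M →ₗ[k] M →ₗ[k] M) (S : Submodule k M) : Prop :=
  ∀ u ∈ S, ∀ v ∈ S, β u v ∈ S

end LeibnizDefs

set_option maxHeartbeats 2000000
section Helpers

variable {K : Type*} [Field K] {L : Type*} [AddCommGroup L] [Module K L]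

lemma bracketSpan_le {β : L →ₗ[K] L →ₗ[K] L} {A B C : Submodule K L}
    (h : ∀ a ∈ A, ∀ b ∈ B, β a b ∈ C) : bracketSpan β A B ≤ C := by
  apply Submodule.span_le.mpr
  rintro z ⟨a, ha, b, hb, rfl⟩
  exact h a ha b hb

lemma mem_bracketSpan {β : L →ₗ[K] L →ₗ[K] L} {A B : Submodule K L} {a b : L}
    (ha : a ∈ A) (hb : b ∈ B) : β a b ∈ bracketSpan β A B :=
  Submodule.subset_span ⟨a, ha, b, hb, rfl⟩

lemma bracketSpan_mono {β : L →ₗ[K] L →ₗ[K] L} {A A' B B' : Submodule K L}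
    (hA : A ≤ A') (hB : B ≤ B') : bracketSpan β A B ≤ bracketSpan β A' B' :=
  bracketSpan_le fun a ha b hb => mem_bracketSpan (hA ha) (hB hb)

lemma derivedSeriesOf_mono {β : L →ₗ[K] L →ₗ[K] L} {A A' : Submodule K L} (h : A ≤ A') :
    ∀ k, derivedSeriesOf β A k ≤ derivedSeriesOf β A' k
  | 0 => h
  | k + 1 => bracketSpan_mono (derivedSeriesOf_mono h k) (derivedSeriesOf_mono h k)

lemma leibnizSolvable_of_le {β : L →ₗ[K] L →ₗ[K] L} {A A' : Submodule K L}
    (h : A ≤ A') (hs : LeibnizSolvable β A') : LeibnizSolvable β A := by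
  obtain ⟨n, hn⟩ := hs
  exact ⟨n, le_bot_iff.mp (hn ▸ derivedSeriesOf_mono h n)⟩

end Helpers

/-- Chain of subspaces spanned by iterates of `f` applied to `v`. -/
def cyclicChain {K : Type*} [Field K] {M : Type*} [AddCommGroup M] [Module K M]
    (f : M →ₗ[K] M) (v : M) : ℕ → Submodule K M
  | 0 => ⊥
  | i + 1 => cyclicChain f v i ⊔ Submodule.span K {(f ^ i) v}
open Module LinearMap in
lemma exists_common_eigenvector
    {L : Type*} [AddCommGroup L] [Module ℂ L] [FiniteDimensional ℂ L]
    {M : Type*} [AddCommGroup M] [Module ℂ M] [FiniteDimensional ℂ M] [Nontrivial M]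
    (β : L →ₗ[ℂ] L →ₗ[ℂ] L) (ρ : L →ₗ[ℂ] M →ₗ[ℂ] M)
    (hρ : ∀ x y : L, ρ (β x y) = ρ x ∘ₗ ρ y - ρ y ∘ₗ ρ x)
    (A : Submodule ℂ L) (hsub : LeibnizSubalgebra β A) (hsol : LeibnizSolvable β A) :
    ∃ v : M, v ≠ 0 ∧ ∀ a ∈ A, ∃ c : ℂ, ρ a v = c • v := by
  suffices H : ∀ (m : ℕ) (A : Submodule ℂ L), LeibnizSubalgebra β A → LeibnizSolvable β A →
      Module.finrank ℂ A = m → ∃ v : M, v ≠ 0 ∧ ∀ a ∈ A, ∃ c : ℂ, ρ a v = c • v by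
    exact H _ A hsub hsol rfl
  intro m
  induction m using Nat.strong_induction_on with
  | _ m IH =>
  intro A hsub hsol hm
  rcases m with _ | m
  · -- A = ⊥
    have hA : A = ⊥ := Submodule.finrank_eq_zero.mp hm
    obtain ⟨v, hv⟩ := exists_ne (0 : M)
    refine ⟨v, hv, ?_⟩
    intro a ha
    rw [hA, Submodule.mem_bot] at ha
    exact ⟨0, by rw [ha, map_zero, zero_smul]; rfl⟩
  · -- inductive step: finrank A = m + 1
    have hAne : A ≠ ⊥ := by
      intro h
      rw [h, finrank_bot] at hm
      exact Nat.succ_ne_zero m hm.symm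
    set D := bracketSpan β A A with hD
    have hDA : D ≤ A := bracketSpan_le hsub
    have hDne : D ≠ A := by
      intro h
      have hall : ∀ k, derivedSeriesOf β A k = A := by
        intro k
        induction k with
        | zero => rfl
        | succ k ih => show bracketSpan β _ _ = A; rw [ih]; exact h
      obtain ⟨nn, hnn⟩ := hsol
      rw [hall] at hnn
      exact hAne hnn
    obtain ⟨x₀, hx₀A, hx₀D⟩ := SetLike.exists_of_lt (lt_of_le_of_ne hDA hDne)
    set Dr : Submodule ℂ A := D.comap A.subtype with hDr
    have hx₀Dr : (⟨x₀, hx₀A⟩ : A) ∉ Dr := hx₀D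
    obtain ⟨f, hf0, hfD⟩ := Dr.exists_dual_map_eq_bot_of_notMem hx₀Dr inferInstance
    set A' : Submodule ℂ L := (LinearMap.ker f).map A.subtype with hA'
    have hA'A : A' ≤ A := by
      rintro _ ⟨y, hy, rfl⟩
      exact y.2
    have hDA' : D ≤ A' := by
      intro d hd
      refine ⟨⟨d, hDA hd⟩, ?_, rfl⟩
      have : f ⟨d, hDA hd⟩ ∈ Dr.map f := ⟨⟨d, hDA hd⟩, hd, rfl⟩
      rw [hfD] at this
      exact this
    have hA'rank : finrank ℂ A' = m := by
      have h1 : finrank ℂ A' = finrank ℂ (LinearMap.ker f) :=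
        Submodule.finrank_map_subtype_eq A (LinearMap.ker f)
      have hrange : LinearMap.range f = ⊤ := by
        rw [eq_top_iff]
        intro c _
        refine ⟨(c / f ⟨x₀, hx₀A⟩) • ⟨x₀, hx₀A⟩, ?_⟩
        rw [map_smul, smul_eq_mul, div_mul_cancel₀ _ hf0]
      have h2 := LinearMap.finrank_range_add_finrank_ker f
      rw [hrange, finrank_top, hm] at h2
      have h3 : finrank ℂ ℂ = 1 := Module.finrank_self ℂ
      omega
    have hA'sub : LeibnizSubalgebra β A' := fun u hu v hv =>
      hDA' (mem_bracketSpan (hA'A hu) (hA'A hv))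
    have hA'sol : LeibnizSolvable β A' := leibnizSolvable_of_le hA'A hsol
    obtain ⟨v₀, hv₀, hv₀e⟩ := IH m (Nat.lt_succ_self m) A' hA'sub hA'sol hA'rank
    set χ : L → ℂ := fun a => open scoped Classical in if h : ∃ c : ℂ, ρ a v₀ = c • v₀ then h.choose else 0 with hχdef
    have hχ : ∀ a ∈ A', ρ a v₀ = χ a • v₀ := by
      intro a ha
      have h := hv₀e a ha
      simp only [hχdef, dif_pos h]
      exact h.choose_spec
    set W : Submodule ℂ M := ⨅ (a : A'), LinearMap.ker (ρ (a : L) - χ (a : L) • LinearMap.id) with hW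
    have hmemW : ∀ u : M, u ∈ W ↔ ∀ a ∈ A', ρ a u = χ a • u := by
      intro u
      simp only [hW, Submodule.mem_iInf, LinearMap.mem_ker, LinearMap.sub_apply,
        LinearMap.smul_apply, LinearMap.id_apply, sub_eq_zero, Subtype.forall]
    have hv₀W : v₀ ∈ W := (hmemW v₀).mpr hχ
    -- zero weight on brackets, via the trace argument
    have hχ0 : ∀ x ∈ A, ∀ a ∈ A', χ (β a x) = 0 := by
      intro x hx
      classical
      -- the cyclic subspaces
      set w : ℕ → M := fun i => ((ρ x) ^ i) v₀ with hw
      set U : ℕ → Submodule ℂ M := cyclicChain (ρ x) v₀ with hUdef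
      have hU0 : U 0 = ⊥ := rfl
      have hUsucc : ∀ i, U (i + 1) = U i ⊔ Submodule.span ℂ {w i} := fun i => rfl
      have hUmono : Monotone U := monotone_nat_of_le_succ fun i => by
        rw [hUsucc]; exact le_sup_left
      have hwU : ∀ i, w i ∈ U (i + 1) := fun i => by
        rw [hUsucc]; exact Submodule.mem_sup_right (Submodule.mem_span_singleton_self _)
      have hwzero : w 0 = v₀ := by
        show ((ρ x) ^ 0) v₀ = v₀
        rw [pow_zero]; rfl
      have hwsucc : ∀ i, w (i + 1) = ρ x (w i) := by
        intro i
        show ((ρ x) ^ (i + 1)) v₀ = ρ x (((ρ x) ^ i) v₀)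
        rw [pow_succ']; rfl
      have claim0 : ∀ i, ∀ u ∈ U i, ρ x u ∈ U (i + 1) := by
        intro i
        induction i with
        | zero =>
          intro u hu
          rw [hU0, Submodule.mem_bot] at hu
          rw [hu, map_zero]; exact Submodule.zero_mem _
        | succ i ih =>
          intro u hu
          rw [hUsucc] at hu
          obtain ⟨u1, hu1, u2, hu2, rfl⟩ := Submodule.mem_sup.mp hu
          obtain ⟨t, rfl⟩ := Submodule.mem_span_singleton.mp hu2
          rw [map_add, map_smul]
          refine Submodule.add_mem _ (hUmono (Nat.le_succ _) (ih u1 hu1))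
            (Submodule.smul_mem _ _ ?_)
          rw [← hwsucc]
          exact hwU _
      have claim1 : ∀ i, ∀ a ∈ A', ρ a (w i) - χ a • w i ∈ U i := by
        intro i
        induction i with
        | zero =>
          intro a ha
          rw [hwzero, hχ a ha, sub_self]
          exact Submodule.zero_mem _
        | succ i ih =>
          intro a ha
          have hax : β a x ∈ A' := hDA' (mem_bracketSpan (hA'A ha) hx)
          have e0 : ρ (β a x) (w i) = ρ a (ρ x (w i)) - ρ x (ρ a (w i)) := by
            rw [hρ a x]; rfl
          have key : ρ a (w (i + 1)) - χ a • w (i + 1) =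
              (ρ (β a x) (w i) - χ (β a x) • w i) + χ (β a x) • w i +
                ρ x (ρ a (w i) - χ a • w i) := by
            rw [hwsucc i, e0, map_sub, map_smul]
            abel
          rw [key]
          refine Submodule.add_mem _ (Submodule.add_mem _ ?_ ?_) ?_
          · exact hUmono (Nat.le_succ i) (ih _ hax)
          · exact Submodule.smul_mem _ _ (hwU i)
          · exact claim0 i _ (ih a ha)
      have claimainv : ∀ b ∈ A', ∀ i, ∀ u ∈ U i, ρ b u ∈ U i := by
        intro b hb i
        induction i with
        | zero =>
          intro u hu
          rw [hU0, Submodule.mem_bot] at hu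
          rw [hu, map_zero]; exact Submodule.zero_mem _
        | succ i ih =>
          intro u hu
          rw [hUsucc] at hu ⊢
          obtain ⟨u1, hu1, u2, hu2, rfl⟩ := Submodule.mem_sup.mp hu
          obtain ⟨t, rfl⟩ := Submodule.mem_span_singleton.mp hu2
          rw [map_add, map_smul]
          refine Submodule.add_mem _ (Submodule.mem_sup_left (ih u1 hu1))
            (Submodule.smul_mem _ _ ?_)
          have hrw : ρ b (w i) = (ρ b (w i) - χ b • w i) + χ b • w i := by abel
          rw [hrw]
          exact Submodule.add_mem _ (Submodule.mem_sup_left (claim1 i b hb))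
            (Submodule.mem_sup_right (Submodule.smul_mem _ _ (Submodule.mem_span_singleton_self _)))
      have hrank : ∀ i, (∀ j, j < i → w j ∉ U j) → Module.finrank ℂ (U i) = i := by
        intro i
        induction i with
        | zero => intro _; rw [hU0]; exact finrank_bot ℂ M
        | succ i ih =>
          intro h
          have hwi : w i ∉ U i := h i (Nat.lt_succ_self i)
          have hw0 : w i ≠ 0 := fun h0 => hwi (h0 ▸ Submodule.zero_mem _)
          have hinf : U i ⊓ Submodule.span ℂ {w i} = ⊥ := by
            rw [eq_bot_iff]
            rintro u ⟨hu1, hu2⟩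
            obtain ⟨t, rfl⟩ := Submodule.mem_span_singleton.mp hu2
            rcases eq_or_ne t 0 with rfl | ht
            · rw [zero_smul]; exact Submodule.zero_mem ⊥
            · exfalso
              apply hwi
              have := Submodule.smul_mem (U i) t⁻¹ hu1
              rwa [smul_smul, inv_mul_cancel₀ ht, one_smul] at this
          have hs := Submodule.finrank_sup_add_finrank_inf_eq (U i) (Submodule.span ℂ {w i})
          rw [hinf, finrank_bot, finrank_span_singleton hw0,
            ih (fun j hj => h j (Nat.lt_succ_of_lt hj))] at hs
          rw [hUsucc]
          omega
      have hex : ∃ i, w i ∈ U i := by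
        by_contra hcon
        push_neg at hcon
        have h1 := hrank (Module.finrank ℂ M + 1) (fun j _ => hcon j)
        have h2 : Module.finrank ℂ (U (Module.finrank ℂ M + 1)) ≤ Module.finrank ℂ M :=
          Submodule.finrank_le _
        omega
      set k := Nat.find hex with hkdef
      have hk : w k ∈ U k := Nat.find_spec hex
      have hmin : ∀ j, j < k → w j ∉ U j := fun j hj => Nat.find_min hex hj
      have hk0 : k ≠ 0 := by
        intro h
        rw [h, hU0, Submodule.mem_bot, hwzero] at hk
        exact hv₀ hk
      have hUk_rank : Module.finrank ℂ (U k) = k := hrank k hmin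
      have hUkx : ∀ u ∈ U k, ρ x u ∈ U k := by
        have main : ∀ i, i ≤ k → ∀ u ∈ U i, ρ x u ∈ U k := by
          intro i
          induction i with
          | zero =>
            intro _ u hu
            rw [hU0, Submodule.mem_bot] at hu
            rw [hu, map_zero]; exact Submodule.zero_mem _
          | succ i ih =>
            intro hik u hu
            rw [hUsucc] at hu
            obtain ⟨u1, hu1, u2, hu2, rfl⟩ := Submodule.mem_sup.mp hu
            obtain ⟨t, rfl⟩ := Submodule.mem_span_singleton.mp hu2
            rw [map_add, map_smul]
            refine Submodule.add_mem _ (ih (Nat.le_of_succ_le hik) u1 hu1)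
              (Submodule.smul_mem _ _ ?_)
            rw [← hwsucc]
            rcases Nat.lt_or_ge (i + 1) k with hlt | hge
            · exact hUmono (Nat.succ_le_of_lt hlt) (hwU (i + 1))
            · have hik' : i + 1 = k := le_antisymm hik hge
              rw [hik']
              exact hk
        exact main k le_rfl
      have htrace : ∀ b, ∀ hb : b ∈ A',
          LinearMap.trace ℂ (U k) ((ρ b).restrict (fun u hu => claimainv b hb k u hu)) =
            (k : ℂ) * χ b := by
        intro b hb
        set g : M →ₗ[ℂ] M := ρ b - χ b • LinearMap.id with hg
        have hgmem : ∀ u ∈ U k, g u ∈ U k := by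
          intro u hu
          simp only [hg, LinearMap.sub_apply, LinearMap.smul_apply, LinearMap.id_apply]
          exact Submodule.sub_mem _ (claimainv b hb k u hu) (Submodule.smul_mem _ _ hu)
        have hstep : ∀ i, ∀ u ∈ U (i + 1), g u ∈ U i := by
          intro i
          induction i with
          | zero =>
            intro u hu
            rw [hUsucc] at hu
            obtain ⟨u1, hu1, u2, hu2, rfl⟩ := Submodule.mem_sup.mp hu
            rw [hU0, Submodule.mem_bot] at hu1
            obtain ⟨t, rfl⟩ := Submodule.mem_span_singleton.mp hu2
            rw [hu1, zero_add, map_smul]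
            refine Submodule.smul_mem _ _ ?_
            have h1 := claim1 0 b hb
            simpa only [hg, LinearMap.sub_apply, LinearMap.smul_apply, LinearMap.id_apply]
              using h1
          | succ i ih =>
            intro u hu
            rw [hUsucc] at hu
            obtain ⟨u1, hu1, u2, hu2, rfl⟩ := Submodule.mem_sup.mp hu
            obtain ⟨t, rfl⟩ := Submodule.mem_span_singleton.mp hu2
            rw [map_add, map_smul]
            refine Submodule.add_mem _ (hUmono (Nat.le_succ i) (ih u1 hu1))
              (Submodule.smul_mem _ _ ?_)
            have h1 := claim1 (i + 1) b hb
            simpa only [hg, LinearMap.sub_apply, LinearMap.smul_apply, LinearMap.id_apply]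
              using h1
        have hpow : ∀ i, ∀ u ∈ U i, (g ^ i) u = 0 := by
          intro i
          induction i with
          | zero =>
            intro u hu
            rw [hU0, Submodule.mem_bot] at hu
            simp [hu]
          | succ i ih =>
            intro u hu
            rw [pow_succ, Module.End.mul_apply]
            exact ih _ (hstep i u hu)
        have hnil : IsNilpotent (g.restrict hgmem) := by
          refine ⟨k, ?_⟩
          rw [Module.End.pow_restrict]
          refine LinearMap.ext fun u => Subtype.ext ?_
          simp [LinearMap.restrict_apply, hpow k u.1 u.2]
        have h0 : LinearMap.trace ℂ (U k) (g.restrict hgmem) = 0 :=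
          (LinearMap.isNilpotent_trace_of_isNilpotent hnil).eq_zero
        have hdecomp : (ρ b).restrict (fun u hu => claimainv b hb k u hu) =
            g.restrict hgmem + χ b • LinearMap.id := by
          refine LinearMap.ext fun u => Subtype.ext ?_
          simp only [LinearMap.restrict_coe_apply, LinearMap.add_apply, LinearMap.smul_apply,
            LinearMap.id_apply, Submodule.coe_add, SetLike.val_smul, hg, LinearMap.sub_apply]
          abel
        rw [hdecomp, map_add, map_smul, h0, zero_add, LinearMap.trace_id, hUk_rank,
          smul_eq_mul, mul_comm]
      intro a ha
      have hax : β a x ∈ A' := hDA' (mem_bracketSpan (hA'A ha) hx)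
      have h1 := htrace (β a x) hax
      have hcomm : (ρ (β a x)).restrict (fun u hu => claimainv _ hax k u hu) =
          (ρ a).restrict (fun u hu => claimainv a ha k u hu) *
              (ρ x).restrict (fun u hu => hUkx u hu) -
            (ρ x).restrict (fun u hu => hUkx u hu) *
              (ρ a).restrict (fun u hu => claimainv a ha k u hu) := by
        refine LinearMap.ext fun u => Subtype.ext ?_
        have hpt := congrArg (fun h => h (u : M)) (hρ a x)
        simp only [LinearMap.comp_apply, LinearMap.sub_apply] at hpt
        simp [LinearMap.restrict_coe_apply, Module.End.mul_apply, hpt]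
      have h2 : LinearMap.trace ℂ (U k)
          ((ρ (β a x)).restrict (fun u hu => claimainv _ hax k u hu)) = 0 := by
        rw [hcomm, map_sub, LinearMap.trace_mul_comm, sub_self]
      rw [h1] at h2
      have hkne : (k : ℂ) ≠ 0 := Nat.cast_ne_zero.mpr hk0
      exact (mul_eq_zero.mp h2).resolve_left hkne
    -- W is invariant under all of A
    have hWinv : ∀ x ∈ A, ∀ u ∈ W, ρ x u ∈ W := by
      intro x hx u hu
      rw [hmemW] at hu ⊢
      intro a ha
      have hax : β a x ∈ A' := hDA' (mem_bracketSpan (hA'A ha) hx)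
      have e0 : ρ a (ρ x u) = ρ (β a x) u + ρ x (ρ a u) := by
        have hpt := congrArg (fun h => h u) (hρ a x)
        simp only [LinearMap.comp_apply, LinearMap.sub_apply] at hpt
        rw [hpt]
        abel
      rw [e0, hu (β a x) hax, hχ0 x hx a ha, zero_smul, zero_add, hu a ha, map_smul]
    -- pick z ∈ A \ A'
    have hA'ltA : A' < A := by
      refine lt_of_le_of_ne hA'A ?_
      intro h
      rw [h, hm] at hA'rank
      omega
    obtain ⟨z, hzA, hzA'⟩ := SetLike.exists_of_lt hA'ltA
    have hz0 : z ≠ 0 := fun h => hzA' (h ▸ Submodule.zero_mem A')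
    -- eigenvector of ρ z inside W
    haveI : Nontrivial W := by
      refine nontrivial_of_ne ⟨v₀, hv₀W⟩ 0 ?_
      intro h
      rw [Submodule.mk_eq_zero] at h
      exact hv₀ h
    set g : W →ₗ[ℂ] W := (ρ z).restrict (fun u hu => hWinv z hzA u hu) with hg
    obtain ⟨μ, hμ⟩ := Module.End.exists_eigenvalue g
    obtain ⟨wv, hwv⟩ := hμ.exists_hasEigenvector
    set v : M := (wv : M) with hv
    have hvne : v ≠ 0 := fun h => hwv.right (Subtype.ext h)
    have hvW : v ∈ W := wv.2
    have hρzv : ρ z v = μ • v := by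
      have := hwv.apply_eq_smul
      have h2 := congrArg (Subtype.val) this
      simpa [hg, LinearMap.restrict_coe_apply] using h2
    -- A = A' ⊔ span z
    have hsup : A ≤ A' ⊔ Submodule.span ℂ {z} := by
      have hle : A' ⊔ Submodule.span ℂ {z} ≤ A :=
        sup_le hA'A ((Submodule.span_singleton_le_iff_mem z A).mpr hzA)
      have hint : A' ⊓ Submodule.span ℂ {z} = ⊥ := by
        rw [eq_bot_iff]
        rintro u ⟨hu1, hu2⟩
        obtain ⟨t, rfl⟩ := Submodule.mem_span_singleton.mp hu2
        rcases eq_or_ne t 0 with rfl | ht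
        · rw [zero_smul]; exact Submodule.zero_mem ⊥
        · exfalso
          apply hzA'
          have := Submodule.smul_mem A' t⁻¹ hu1
          rwa [smul_smul, inv_mul_cancel₀ ht, one_smul] at this
      have hfr := Submodule.finrank_sup_add_finrank_inf_eq A' (Submodule.span ℂ {z})
      rw [hint, finrank_bot, finrank_span_singleton hz0, hA'rank] at hfr
      have heq := Submodule.eq_of_le_of_finrank_le hle (by rw [hm]; omega)
      rw [heq]
    refine ⟨v, hvne, ?_⟩
    intro a ha
    obtain ⟨a', ha', u, hu, rfl⟩ := Submodule.mem_sup.mp (hsup ha)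
    obtain ⟨t, rfl⟩ := Submodule.mem_span_singleton.mp hu
    refine ⟨χ a' + t * μ, ?_⟩
    rw [map_add, LinearMap.add_apply, map_smul, LinearMap.smul_apply, hρzv,
      (hmemW v).mp hvW a' ha', add_smul, smul_smul, mul_comm t μ]
universe uM in
open Module in
lemma flag_aux {L : Type*} [AddCommGroup L] [Module ℂ L] [FiniteDimensional ℂ L]
    (β : L →ₗ[ℂ] L →ₗ[ℂ] L) (hsolv : LeibnizSolvable β (⊤ : Submodule ℂ L)) :
    ∀ (m : ℕ) (M : Type uM) [AddCommGroup M] [Module ℂ M] [FiniteDimensional ℂ M],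
      Module.finrank ℂ M = m → ∀ ρ : L →ₗ[ℂ] M →ₗ[ℂ] M,
      (∀ x y : L, ρ (β x y) = ρ x ∘ₗ ρ y - ρ y ∘ₗ ρ x) →
      ∃ V : Fin (m + 1) → Submodule ℂ M, Monotone V ∧ V 0 = ⊥ ∧ V (Fin.last m) = ⊤ ∧
        (∀ i : Fin (m + 1), Module.finrank ℂ (V i) = (i : ℕ)) ∧
        (∀ i : Fin (m + 1), ∀ x : L, ∀ v ∈ V i, ρ x v ∈ V i) := by
  intro m
  induction m with
  | zero =>
    intro M _ _ _ hM ρ _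
    haveI : Subsingleton M := Module.finrank_zero_iff.mp hM
    have hbt : (⊥ : Submodule ℂ M) = ⊤ := by
      ext u
      simp [Subsingleton.elim u 0]
    refine ⟨fun _ => ⊥, monotone_const, rfl, hbt, ?_, ?_⟩
    · intro i
      have := i.isLt
      rw [finrank_bot]
      omega
    · intro i x v hv
      rw [Submodule.mem_bot] at hv
      rw [hv, map_zero]
      exact Submodule.zero_mem _
  | succ m IH =>
    intro M _ _ _ hM ρ hρ
    haveI : Nontrivial M := Module.finrank_pos_iff.mp (by rw [hM]; exact Nat.succ_pos m)
    obtain ⟨v, hv, hve⟩ := exists_common_eigenvector β ρ hρ ⊤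
      (fun u _ v _ => Submodule.mem_top) hsolv
    set W : Submodule ℂ M := Submodule.span ℂ {v} with hWdef
    have hWinv : ∀ x : L, ∀ u ∈ W, ρ x u ∈ W := by
      intro x u hu
      obtain ⟨t, rfl⟩ := Submodule.mem_span_singleton.mp hu
      obtain ⟨c, hc⟩ := hve x Submodule.mem_top
      rw [map_smul]
      rw [hc]
      exact Submodule.smul_mem _ _ (Submodule.smul_mem _ _ (Submodule.mem_span_singleton_self v))
    have hWle : ∀ x : L, W ≤ W.comap (ρ x) := fun x u hu => hWinv x u hu
    set ρ' : L →ₗ[ℂ] (M ⧸ W) →ₗ[ℂ] (M ⧸ W) :=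
      { toFun := fun x => Submodule.mapQ W W (ρ x) (hWle x)
        map_add' := by
          intro x y
          refine Submodule.linearMap_qext _ ?_
          ext u
          simp [Submodule.mapQ_apply]
        map_smul' := by
          intro c x
          refine Submodule.linearMap_qext _ ?_
          ext u
          simp [Submodule.mapQ_apply] } with hρ'def
    have hρ'apply : ∀ (x : L) (u : M), ρ' x (W.mkQ u) = W.mkQ (ρ x u) := by
      intro x u
      simp [hρ'def, Submodule.mapQ_apply]
    have hρ' : ∀ x y : L, ρ' (β x y) = ρ' x ∘ₗ ρ' y - ρ' y ∘ₗ ρ' x := by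
      intro x y
      refine Submodule.linearMap_qext _ ?_
      ext u
      simp only [LinearMap.coe_comp, Function.comp_apply, Submodule.mkQ_apply,
        LinearMap.sub_apply, LinearMap.comp_apply]
      rw [← Submodule.mkQ_apply W u]
      simp only [hρ'apply, ← map_sub]
      congr 1
      have hpt := congrArg (fun h => h u) (hρ x y)
      simpa using hpt
    have hWrank : finrank ℂ W = 1 := finrank_span_singleton hv
    have hQrank : finrank ℂ (M ⧸ W) = m := by
      have := Submodule.finrank_quotient_add_finrank W
      rw [hWrank, hM] at this
      omega
    obtain ⟨V', hmono, h0, hlast, hdim, hinv⟩ := IH (M ⧸ W) hQrank ρ' hρ'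
    refine ⟨Fin.cases ⊥ (fun i => (V' i).comap W.mkQ), ?_, ?_, ?_, ?_, ?_⟩
    · -- monotone
      intro i j hij
      rcases Fin.eq_zero_or_eq_succ i with rfl | ⟨i', rfl⟩
      · simp only [Fin.cases_zero]
        exact bot_le
      · rcases Fin.eq_zero_or_eq_succ j with rfl | ⟨j', rfl⟩
        · exact absurd (le_antisymm hij (Fin.zero_le _)) (Fin.succ_ne_zero i')
        · simp only [Fin.cases_succ]
          exact Submodule.comap_mono (hmono (by rwa [Fin.succ_le_succ_iff] at hij))
    · simp
    · rw [← Fin.succ_last]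
      simp only [Fin.cases_succ]
      rw [hlast, Submodule.comap_top]
    · -- dimensions
      intro i
      rcases Fin.eq_zero_or_eq_succ i with rfl | ⟨i', rfl⟩
      · simp [finrank_bot]
        exact finrank_bot ℂ M
      · simp only [Fin.cases_succ, Fin.val_succ]
        set C : Submodule ℂ M := (V' i').comap W.mkQ with hC
        have hWC : W ≤ C := by
          intro u hu
          have : W.mkQ u = 0 := by
            rw [Submodule.mkQ_apply, Submodule.Quotient.mk_eq_zero]
            exact hu
          show W.mkQ u ∈ V' i'
          rw [this]
          exact Submodule.zero_mem _
        have h1 := LinearMap.finrank_range_add_finrank_ker (W.mkQ.domRestrict C)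
        have hr : LinearMap.range (W.mkQ.domRestrict C) = V' i' := by
          rw [LinearMap.range_domRestrict]
          apply Submodule.map_comap_eq_self
          rw [Submodule.range_mkQ]
          exact le_top
        have hker : LinearMap.ker (W.mkQ.domRestrict C) = W.comap C.subtype := by
          ext u
          simp [LinearMap.mem_ker, Submodule.Quotient.mk_eq_zero]
        have hkerrank : finrank ℂ (LinearMap.ker (W.mkQ.domRestrict C)) = 1 := by
          rw [hker]
          rw [(Submodule.comapSubtypeEquivOfLe hWC).finrank_eq]
          exact hWrank
        rw [hr, hker] at h1
        rw [hker] at hkerrank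
        rw [hdim i'] at h1
        change finrank ℂ C = _
        omega
    · -- invariance
      intro i x u hu
      rcases Fin.eq_zero_or_eq_succ i with rfl | ⟨i', rfl⟩
      · simp only [Fin.cases_zero] at hu ⊢
        rw [Submodule.mem_bot] at hu
        rw [hu, map_zero]
        exact Submodule.zero_mem _
      · simp only [Fin.cases_succ] at hu ⊢
        show W.mkQ (ρ x u) ∈ V' i'
        rw [← hρ'apply]
        exact hinv i' x _ hu
/-- Weak Lie theorem: a solvable complex Leibniz algebra has a complete flag invariant
under all left multiplications. -/
theorem stmt_12 {L : Type*} [AddCommGroup L] [Module ℂ L] [FiniteDimensional ℂ L]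
    (β : L →ₗ[ℂ] L →ₗ[ℂ] L)
    (leib : ∀ x y z : L, β x (β y z) = β (β x y) z + β y (β x z))
    (hsolv : LeibnizSolvable β (⊤ : Submodule ℂ L))
    (n : ℕ) (hn : Module.finrank ℂ L = n) :
    ∃ V : Fin (n + 1) → Submodule ℂ L,
      Monotone V ∧ V 0 = ⊥ ∧ V (Fin.last n) = ⊤ ∧
      (∀ i : Fin (n + 1), Module.finrank ℂ (V i) = (i : ℕ)) ∧
      (∀ i : Fin (n + 1), ∀ x : L, ∀ v ∈ V i, β x v ∈ V i) := by
  have hρ : ∀ x y : L, β (β x y) = β x ∘ₗ β y - β y ∘ₗ β x := by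
    intro x y
    ext z
    simp only [LinearMap.comp_apply, LinearMap.sub_apply]
    rw [leib x y z]
    abel
  exact flag_aux β hsolv n L hn β hρ
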